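/- Let 0 < L_u < M_u and 0 < L_α < M_α with M_α < π/2, let u_d and α_d be the continuously differentiable reference functions defined by u_d(t) = t/5 for t/5 ≤ L_u, u_d(t) = arctan(a_u(t/5 - L_u))/a_u + L_u for t/5 > L_u (with a_u = π/(2(M_u - L_u))), and α_d(t) = t for t ≤ L_α, α_d(t) = arctan(a_α(t - L_α))/a_α + L_α for t > L_α (with a_α = π/(2(M_α - L_α))). Then the desired vertical body velocity w_d(t) = u_d(t)·tan(α_d(t)) is continuously differentiable on [0, ∞) and satisfies 0 ≤ w_d(t) < M_u·tan(M_α) for all t ≥ 0. -/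

import Mathlib

open Real Filter

private noncomputable def glue (a : ℝ) : ℝ → ℝ :=
  fun x => if x ≤ 0 then x else Real.arctan (a * x) / a

private lemma glue_arctan_hasDerivAt (a : ℝ) (ha : 0 < a) (x : ℝ) :
    HasDerivAt (fun y => Real.arctan (a * y) / a) (1 / (1 + (a * x) ^ 2)) x := by
  have h1 : HasDerivAt (fun y : ℝ => a * y) a x := by
    simpa using (hasDerivAt_id x).const_mul a
  have h2 := (Real.hasDerivAt_arctan (a * x)).comp x h1
  have h3 := h2.div_const a
  refine h3.congr_deriv ?_
  field_simp

private lemma glue_hasDerivAt (a : ℝ) (ha : 0 < a) (x : ℝ) :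
    HasDerivAt (glue a) (1 / (1 + (a * max x 0) ^ 2)) x := by
  rcases lt_trichotomy x 0 with hx | hx | hx
  · have heq : glue a =ᶠ[nhds x] (fun y => y) := by
      filter_upwards [Iio_mem_nhds hx] with y hy
      simp [glue, (Set.mem_Iio.mp hy).le, not_lt.mpr (Set.mem_Iio.mp hy).le]
    have : HasDerivAt (glue a) 1 x := (hasDerivAt_id x).congr_of_eventuallyEq heq
    convert this using 1
    rw [max_eq_right hx.le]
    norm_num
  · subst hx
    have hle : HasDerivWithinAt (glue a) 1 (Set.Iic 0) 0 := by
      refine (hasDerivAt_id (0:ℝ)).hasDerivWithinAt.congr ?_ ?_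
      · intro y hy; simp [glue, Set.mem_Iic.mp hy]
      · simp [glue]
    have hge : HasDerivWithinAt (glue a) 1 (Set.Ici 0) 0 := by
      have h := (glue_arctan_hasDerivAt a ha 0).hasDerivWithinAt (s := Set.Ici 0)
      have h' : HasDerivWithinAt (fun y => Real.arctan (a * y) / a) 1 (Set.Ici 0) 0 := by
        refine h.congr_deriv ?_; norm_num
      refine h'.congr ?_ ?_
      · intro y hy
        by_cases hy0 : y ≤ 0
        · have : y = 0 := le_antisymm hy0 (Set.mem_Ici.mp hy)
          simp [glue, this]
        · simp [glue, hy0]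
      · simp [glue]
    have := hle.union hge
    rw [Set.Iic_union_Ici, hasDerivWithinAt_univ] at this
    refine this.congr_deriv ?_
    norm_num
  · have heq : glue a =ᶠ[nhds x] (fun y => Real.arctan (a * y) / a) := by
      filter_upwards [Ioi_mem_nhds hx] with y hy
      simp [glue, not_le.mpr (Set.mem_Ioi.mp hy)]
    have := (glue_arctan_hasDerivAt a ha x).congr_of_eventuallyEq heq
    rwa [max_eq_left hx.le]

private lemma glue_contDiff (a : ℝ) (ha : 0 < a) : ContDiff ℝ 1 (glue a) := by
  rw [contDiff_one_iff_deriv]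
  constructor
  · exact fun x => (glue_hasDerivAt a ha x).differentiableAt
  · have hderiv : deriv (glue a) = fun x => 1 / (1 + (a * max x 0) ^ 2) :=
      funext fun x => (glue_hasDerivAt a ha x).deriv
    rw [hderiv]
    refine continuous_const.div ?_ (fun x => by positivity)
    continuity

private lemma glue_nonneg (a : ℝ) (ha : 0 < a) {x : ℝ} (hx : 0 ≤ x) : 0 ≤ glue a x := by
  unfold glue
  split_ifs with h
  · exact hx
  · have hax : (0:ℝ) ≤ a * x := mul_nonneg ha.le (not_le.mp h).le
    exact div_nonneg (by rw [← Real.arctan_zero]; exact Real.arctan_strictMono.monotone hax) ha.le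

private lemma glue_lt (a : ℝ) (ha : 0 < a) {x M : ℝ} (hM : 0 < M)
    (haM : Real.pi / 2 / a ≤ M) : glue a x < M := by
  unfold glue
  split_ifs with h
  · exact lt_of_le_of_lt h hM
  · calc Real.arctan (a * x) / a < (Real.pi / 2) / a := by
          gcongr
          exact Real.arctan_lt_pi_div_two _
      _ ≤ M := haM

theorem wd_reference_properties
    (Lu Mu Lα Mα : ℝ) (hLu : 0 < Lu) (hLuMu : Lu < Mu)
    (hLα : 0 < Lα) (hLαMα : Lα < Mα) (hMα : Mα < Real.pi / 2) :
    let au : ℝ := Real.pi / (2 * (Mu - Lu))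
    let aα : ℝ := Real.pi / (2 * (Mα - Lα))
    let ud : ℝ → ℝ := fun t =>
      if t / 5 ≤ Lu then t / 5 else Real.arctan (au * (t / 5 - Lu)) / au + Lu
    let αd : ℝ → ℝ := fun t =>
      if t ≤ Lα then t else Real.arctan (aα * (t - Lα)) / aα + Lα
    let wd : ℝ → ℝ := fun t => ud t * Real.tan (αd t)
    ContDiffOn ℝ 1 wd (Set.Ici (0 : ℝ)) ∧
    (∀ t : ℝ, 0 ≤ t → 0 ≤ wd t ∧ wd t < Mu * Real.tan Mα) := by
  intro au aα ud αd wd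
  have hMuLu : (0:ℝ) < Mu - Lu := by linarith
  have hMαLα : (0:ℝ) < Mα - Lα := by linarith
  have hau : 0 < au := div_pos Real.pi_pos (by linarith)
  have haα : 0 < aα := div_pos Real.pi_pos (by linarith)
  have hpi := Real.pi_pos
  have hud_eq : ud = fun t => glue au (t / 5 - Lu) + Lu := by
    funext t
    simp only [ud, glue]
    by_cases h : t / 5 - Lu ≤ 0
    · rw [if_pos h, if_pos (by linarith)]; ring
    · rw [if_neg h, if_neg (by intro hc; exact h (by linarith))]
  have hαd_eq : αd = fun t => glue aα (t - Lα) + Lα := by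
    funext t
    simp only [αd, glue]
    by_cases h : t - Lα ≤ 0
    · rw [if_pos h, if_pos (by linarith)]; ring
    · rw [if_neg h, if_neg (by intro hc; exact h (by linarith))]
  have hud_cd : ContDiff ℝ 1 ud := by
    rw [hud_eq]
    exact (((glue_contDiff au hau).comp
      ((contDiff_id.div_const 5).sub contDiff_const)).add contDiff_const)
  have hαd_cd : ContDiff ℝ 1 αd := by
    rw [hαd_eq]
    exact (((glue_contDiff aα haα).comp
      (contDiff_id.sub contDiff_const)).add contDiff_const)
  have hau_eq : Real.pi / 2 / au ≤ Mu - Lu := by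
    have : Real.pi / 2 / au = Mu - Lu := by
      simp only [au]; field_simp
    linarith
  have haα_eq : Real.pi / 2 / aα ≤ Mα - Lα := by
    have : Real.pi / 2 / aα = Mα - Lα := by
      simp only [aα]; field_simp
    linarith
  have hud_lt : ∀ t, ud t < Mu := by
    intro t
    rw [hud_eq]
    show glue au (t / 5 - Lu) + Lu < Mu
    have := glue_lt au hau (x := t / 5 - Lu) hMuLu hau_eq
    linarith
  have hαd_lt : ∀ t, αd t < Mα := by
    intro t
    rw [hαd_eq]
    show glue aα (t - Lα) + Lα < Mα
    have := glue_lt aα haα (x := t - Lα) hMαLα haα_eq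
    linarith
  have hud_nonneg : ∀ t, 0 ≤ t → 0 ≤ ud t := by
    intro t ht
    simp only [ud]
    split_ifs with h
    · positivity
    · push_neg at h
      have h1 : (0:ℝ) ≤ Real.arctan (au * (t / 5 - Lu)) := by
        rw [← Real.arctan_zero]
        exact Real.arctan_strictMono.monotone (by nlinarith)
      have := div_nonneg h1 hau.le
      linarith
  have hαd_nonneg : ∀ t, 0 ≤ t → 0 ≤ αd t := by
    intro t ht
    simp only [αd]
    split_ifs with h
    · exact ht
    · push_neg at h
      have h1 : (0:ℝ) ≤ Real.arctan (aα * (t - Lα)) := by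
        rw [← Real.arctan_zero]
        exact Real.arctan_strictMono.monotone (by nlinarith)
      have := div_nonneg h1 haα.le
      linarith
  have hmem : ∀ t, 0 ≤ t → αd t ∈ Set.Ioo (-(Real.pi / 2)) (Real.pi / 2) :=
    fun t ht => ⟨by have := hαd_nonneg t ht; linarith, lt_of_lt_of_le (hαd_lt t) hMα.le⟩
  constructor
  · intro t ht
    apply ContDiffAt.contDiffWithinAt
    have hcos : Real.cos (αd t) ≠ 0 :=
      (Real.cos_pos_of_mem_Ioo (hmem t ht)).ne'
    have htan : ContDiffAt ℝ 1 (Real.tan ∘ αd) t :=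
      ContDiffAt.comp t (Real.contDiffAt_tan.mpr hcos) hαd_cd.contDiffAt
    exact hud_cd.contDiffAt.mul htan
  · intro t ht
    have hmemM : Mα ∈ Set.Ioo (-(Real.pi / 2)) (Real.pi / 2) := ⟨by linarith, hMα⟩
    have hmem0 : (0:ℝ) ∈ Set.Ioo (-(Real.pi / 2)) (Real.pi / 2) := ⟨by linarith, by linarith⟩
    have htan_nonneg : 0 ≤ Real.tan (αd t) := by
      have := Real.strictMonoOn_tan.monotoneOn hmem0 (hmem t ht) (hαd_nonneg t ht)
      rwa [Real.tan_zero] at this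
    have htan_lt : Real.tan (αd t) < Real.tan Mα :=
      Real.strictMonoOn_tan (hmem t ht) hmemM (hαd_lt t)
    have htanM_pos : 0 < Real.tan Mα := by
      have := Real.strictMonoOn_tan hmem0 hmemM (by linarith)
      rwa [Real.tan_zero] at this
    have hudn := hud_nonneg t ht
    have hudl := hud_lt t
    refine ⟨mul_nonneg hudn htan_nonneg, ?_⟩
    show ud t * Real.tan (αd t) < Mu * Real.tan Mα
    calc ud t * Real.tan (αd t) ≤ ud t * Real.tan Mα := by nlinarith
      _ < Mu * Real.tan Mα := by nlinarith
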